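/- arXiv:0810.1240 — 3 statements merged into one kernel-verified Lean document; each statement's English description precedes it below -/
import Mathlib

section
/- For a pure state |ψ⟩ of two qubits (unit vector in ℂ²⊗ℂ²), the one-tangle of the reduced density matrix equals the squared concurrence: 4 det(Tr_B |ψ⟩⟨ψ|) = |⟨ψ*| σ^y ⊗ σ^y |ψ⟩|², where |ψ*⟩ denotes the componentwise complex conjugate of |ψ⟩ in the standard basis. -/
open Matrix

/-- The Pauli matrix `σʸ`. -/
def pauliY : Matrix (Fin 2) (Fin 2) ℂ := !![0, -Complex.I; Complex.I, 0]

/-- For a pure state `|ψ⟩` of two qubits, represented by its coefficient matrix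
`M : Matrix (Fin 2) (Fin 2) ℂ` in the standard product basis (a unit vector), the
one-tangle of the reduced density matrix equals the squared concurrence:
`4 det (Tr_B |ψ⟩⟨ψ|) = |⟨ψ*| σʸ ⊗ σʸ |ψ⟩|²`, where
`⟨ψ*| σʸ⊗σʸ |ψ⟩ = ∑ M k l * σʸ k i * σʸ l j * M i j`. -/
theorem one_tangle_eq_concurrence_sq (M : Matrix (Fin 2) (Fin 2) ℂ)
    (hunit : ∑ i, ∑ j, Complex.normSq (M i j) = 1) :
    4 * (M * Mᴴ).det =
      ((‖(∑ k, ∑ l, ∑ i, ∑ j,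
          M k l * pauliY k i * pauliY l j * M i j)‖) ^ 2 : ℝ) := by
  have hs : (∑ k, ∑ l, ∑ i, ∑ j,
      M k l * pauliY k i * pauliY l j * M i j) = -2 * M.det := by
    simp [pauliY, Fin.sum_univ_two, Matrix.det_fin_two]
    ring_nf
    simp [Complex.I_sq]
  rw [hs, Complex.sq_norm, det_mul, det_conjTranspose]
  rw [show star M.det = (starRingEnd ℂ) M.det from rfl, Complex.mul_conj,
    Complex.normSq_mul]
  push_cast
  norm_num [Complex.normSq]
end

section
/- For a two-qubit density matrix of the form ρ = [[a,0,0,c],[0,x,z,0],[0,z*,y,0],[0,c*,0,b]] (in the basis |00⟩,|01⟩,|10⟩,|11⟩) with a,b,x,y ≥ 0 real and c,z complex, the Wootters concurrence equals C = 2 max{0, |c| − √(xy), |z| − √(ab)}. -/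
open Matrix Polynomial

/-- The X-form two-qubit density matrix in the ordered basis `|00⟩,|01⟩,|10⟩,|11⟩`. -/
def Xrho (a b x y : ℝ) (c z : ℂ) : Matrix (Fin 4) (Fin 4) ℂ :=
  !![(a : ℂ), 0, 0, c;
     0, (x : ℂ), z, 0;
     0, (starRingEnd ℂ) z, (y : ℂ), 0;
     (starRingEnd ℂ) c, 0, 0, (b : ℂ)]

/-- `σʸ ⊗ σʸ` in the ordered basis `|00⟩,|01⟩,|10⟩,|11⟩`. -/
def sigmaYY : Matrix (Fin 4) (Fin 4) ℂ :=
  !![0, 0, 0, -1;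
     0, 0, 1, 0;
     0, 1, 0, 0;
     -1, 0, 0, 0]

set_option maxHeartbeats 1000000 in
lemma Xmat_eq (a b x y : ℝ) (c z : ℂ) :
    Xrho a b x y c z * sigmaYY * (Xrho a b x y c z).map star * sigmaYY =
    !![(a*b : ℂ) + c * (starRingEnd ℂ) c, 0, 0, a*c + c*a;
       0, (x*y : ℂ) + z * (starRingEnd ℂ) z, x*z + z*x, 0;
       0, (starRingEnd ℂ) z * y + y * (starRingEnd ℂ) z, (starRingEnd ℂ) z * z + y*x, 0;
       (starRingEnd ℂ) c * b + b * (starRingEnd ℂ) c, 0, 0, (starRingEnd ℂ) c * c + b*a] := by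
  ext i j
  simp only [Matrix.mul_apply, Fin.sum_univ_four]
  fin_cases i <;> fin_cases j <;>
    simp [Xrho, sigmaYY, Matrix.map_apply, Matrix.vecHead, Matrix.vecTail] <;> ring

set_option maxHeartbeats 2000000 in
lemma charpoly_aux (p q r s u v w t : ℂ) :
    (!![p, 0, 0, q;
       0, u, v, 0;
       0, w, t, 0;
       r, 0, 0, s] : Matrix (Fin 4) (Fin 4) ℂ).charpoly =
    ((X^2 - Polynomial.C (p + s) * X + Polynomial.C (p*s - q*r)) *
     (X^2 - Polynomial.C (u + t) * X + Polynomial.C (u*t - v*w))) := by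
  rw [Matrix.charpoly]
  simp [Matrix.det_succ_row_zero, Fin.sum_univ_succ, Matrix.charmatrix_apply,
    Matrix.one_apply, Fin.succAbove]
  ring

/-- **Wootters' concurrence of an X-form state.** For a two-qubit density matrix
`ρ = [[a,0,0,c],[0,x,z,0],[0,z*,y,0],[c*,0,0,b]]` (positive semidefinite with
trace 1), if `λ₁ ≥ λ₂ ≥ λ₃ ≥ λ₄ ≥ 0` are the square roots of the eigenvalues of
`ρ (σʸ⊗σʸ) ρ* (σʸ⊗σʸ)`, then the Wootters concurrence
`C = max {0, λ₁−λ₂−λ₃−λ₄}` equals `2 max {0, |c| − √(xy), |z| − √(ab)}`. -/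
theorem concurrence_X_form (a b x y : ℝ) (c z : ℂ)
    (ha : 0 ≤ a) (hb : 0 ≤ b) (hx : 0 ≤ x) (hy : 0 ≤ y)
    (htr : a + b + x + y = 1)
    (hc : Complex.normSq c ≤ a * b) (hz : Complex.normSq z ≤ x * y)
    (lam : Fin 4 → ℝ) (hmono : Antitone lam) (hnn : ∀ i, 0 ≤ lam i)
    (hchar : (Xrho a b x y c z * sigmaYY * (Xrho a b x y c z).map star * sigmaYY).charpoly
      = ∏ i, (X - C ((lam i : ℂ) ^ 2))) :
    max 0 (lam 0 - lam 1 - lam 2 - lam 3)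
      = 2 * max 0 (max (‖c‖ - Real.sqrt (x * y))
                       (‖z‖ - Real.sqrt (a * b))) := by
  have hab : (0:ℝ) ≤ a * b := mul_nonneg ha hb
  have hxy : (0:ℝ) ≤ x * y := mul_nonneg hx hy
  set K := ‖c‖ with hK
  set L := ‖z‖ with hL
  set s := Real.sqrt (a * b) with hsdef
  set t := Real.sqrt (x * y) with htdef
  have hKnn : 0 ≤ K := norm_nonneg c
  have hLnn : 0 ≤ L := norm_nonneg z
  have hsnn : 0 ≤ s := Real.sqrt_nonneg _
  have htnn : 0 ≤ t := Real.sqrt_nonneg _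
  have hKs : K ≤ s := by
    rw [hK, Complex.norm_def, hsdef]; exact Real.sqrt_le_sqrt hc
  have hLt : L ≤ t := by
    rw [hL, Complex.norm_def, htdef]; exact Real.sqrt_le_sqrt hz
  set ν : Fin 4 → ℝ := ![s + K, s - K, t + L, t - L] with hν
  have hνnn : ∀ i, 0 ≤ ν i := by
    intro i
    fin_cases i <;> simp [hν] <;> linarith
  -- squares of ν
  have h0 : ((ν 0 : ℝ) : ℂ)^2 = (a:ℂ)*b + c * (starRingEnd ℂ) c + 2 * ((s*K : ℝ) : ℂ) := by
    have hr : (ν 0)^2 = a*b + Complex.normSq c + 2*(s*K) := by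
      show (s + K)^2 = _
      rw [add_sq, hsdef, Real.sq_sqrt hab, hK, Complex.sq_norm]; ring
    rw [← Complex.ofReal_pow, hr]
    push_cast [← Complex.mul_conj]
    ring
  have h1 : ((ν 1 : ℝ) : ℂ)^2 = (a:ℂ)*b + c * (starRingEnd ℂ) c - 2 * ((s*K : ℝ) : ℂ) := by
    have hr : (ν 1)^2 = a*b + Complex.normSq c - 2*(s*K) := by
      show (s - K)^2 = _
      rw [sub_sq, hsdef, Real.sq_sqrt hab, hK, Complex.sq_norm]; ring
    rw [← Complex.ofReal_pow, hr]
    push_cast [← Complex.mul_conj]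
    ring
  have h2 : ((ν 2 : ℝ) : ℂ)^2 = (x:ℂ)*y + z * (starRingEnd ℂ) z + 2 * ((t*L : ℝ) : ℂ) := by
    have hr : (ν 2)^2 = x*y + Complex.normSq z + 2*(t*L) := by
      show (t + L)^2 = _
      rw [add_sq, htdef, Real.sq_sqrt hxy, hL, Complex.sq_norm]; ring
    rw [← Complex.ofReal_pow, hr]
    push_cast [← Complex.mul_conj]
    ring
  have h3 : ((ν 3 : ℝ) : ℂ)^2 = (x:ℂ)*y + z * (starRingEnd ℂ) z - 2 * ((t*L : ℝ) : ℂ) := by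
    have hr : (ν 3)^2 = x*y + Complex.normSq z - 2*(t*L) := by
      show (t - L)^2 = _
      rw [sub_sq, htdef, Real.sq_sqrt hxy, hL, Complex.sq_norm]; ring
    rw [← Complex.ofReal_pow, hr]
    push_cast [← Complex.mul_conj]
    ring
  -- relations for the square roots
  have hD2 : (Polynomial.C ((s*K : ℝ) : ℂ))^2
      = Polynomial.C (a:ℂ) * Polynomial.C (b:ℂ) * (Polynomial.C c * Polynomial.C ((starRingEnd ℂ) c)) := by
    have : ((s*K : ℝ) : ℂ)^2 = (a:ℂ)*b*(c * (starRingEnd ℂ) c) := by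
      rw [← Complex.ofReal_pow]
      have : (s*K)^2 = (a*b) * Complex.normSq c := by
        rw [mul_pow, hsdef, Real.sq_sqrt hab, hK, Complex.sq_norm]
      rw [this]
      push_cast [← Complex.mul_conj]
      ring
    rw [← map_pow, this]
    simp [_root_.map_mul]
  have hE2 : (Polynomial.C ((t*L : ℝ) : ℂ))^2
      = Polynomial.C (x:ℂ) * Polynomial.C (y:ℂ) * (Polynomial.C z * Polynomial.C ((starRingEnd ℂ) z)) := by
    have : ((t*L : ℝ) : ℂ)^2 = (x:ℂ)*y*(z * (starRingEnd ℂ) z) := by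
      rw [← Complex.ofReal_pow]
      have : (t*L)^2 = (x*y) * Complex.normSq z := by
        rw [mul_pow, htdef, Real.sq_sqrt hxy, hL, Complex.sq_norm]
      rw [this]
      push_cast [← Complex.mul_conj]
      ring
    rw [← map_pow, this]
    simp [_root_.map_mul]
  -- pair products
  have hpair1 : (X - Polynomial.C (((ν 0 : ℝ) : ℂ)^2)) * (X - Polynomial.C (((ν 1 : ℝ) : ℂ)^2))
      = X^2 - Polynomial.C (((a:ℂ)*b + c * (starRingEnd ℂ) c) + ((starRingEnd ℂ) c * c + (b:ℂ)*a)) * X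
        + Polynomial.C (((a:ℂ)*b + c * (starRingEnd ℂ) c)*((starRingEnd ℂ) c * c + (b:ℂ)*a)
            - ((a:ℂ)*c + c*a)*((starRingEnd ℂ) c * b + (b:ℂ) * (starRingEnd ℂ) c)) := by
    rw [h0, h1]
    simp only [map_add, map_sub, _root_.map_mul, map_pow, map_ofNat]
    linear_combination (-4 : Polynomial ℂ) * hD2
  have hpair2 : (X - Polynomial.C (((ν 2 : ℝ) : ℂ)^2)) * (X - Polynomial.C (((ν 3 : ℝ) : ℂ)^2))
      = X^2 - Polynomial.C (((x:ℂ)*y + z * (starRingEnd ℂ) z) + ((starRingEnd ℂ) z * z + (y:ℂ)*x)) * X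
        + Polynomial.C (((x:ℂ)*y + z * (starRingEnd ℂ) z)*((starRingEnd ℂ) z * z + (y:ℂ)*x)
            - ((x:ℂ)*z + z*x)*((starRingEnd ℂ) z * y + (y:ℂ) * (starRingEnd ℂ) z)) := by
    rw [h2, h3]
    simp only [map_add, map_sub, _root_.map_mul, map_pow, map_ofNat]
    linear_combination (-4 : Polynomial ℂ) * hE2
  -- the characteristic polynomial also equals the product over ν
  have hchar2 : (Xrho a b x y c z * sigmaYY * (Xrho a b x y c z).map star * sigmaYY).charpoly
      = ∏ i, (X - Polynomial.C (((ν i : ℝ) : ℂ)^2)) := by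
    rw [Xmat_eq, charpoly_aux, Fin.prod_univ_four, hpair1,
      mul_assoc _ _ (X - Polynomial.C (((ν 3 : ℝ) : ℂ)^2)), hpair2]
  have hprod : (∏ i, (X - Polynomial.C ((lam i : ℂ)^2)))
      = ∏ i, (X - Polynomial.C (((ν i : ℝ) : ℂ)^2)) := by
    rw [← hchar, hchar2]
  -- multiset of complex squares
  have hmsC : (Finset.univ.val.map fun i => ((lam i : ℂ)^2))
      = Finset.univ.val.map fun i => (((ν i : ℝ) : ℂ)^2) := by
    have e : ∀ f : Fin 4 → ℂ, (∏ i, (X - Polynomial.C (f i)))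
        = ((Finset.univ.val.map f).map fun a => X - Polynomial.C a).prod := by
      intro f
      rw [Finset.prod_eq_multiset_prod, Multiset.map_map]
      rfl
    have h4 := congrArg Polynomial.roots hprod
    rwa [e, e, Polynomial.roots_multiset_prod_X_sub_C,
      Polynomial.roots_multiset_prod_X_sub_C] at h4
  -- multiset of real squares
  have hmsR : (Finset.univ.val.map fun i => (lam i)^2)
      = Finset.univ.val.map fun i => (ν i)^2 := by
    apply Multiset.map_injective Complex.ofReal_injective
    rw [Multiset.map_map, Multiset.map_map]
    simpa [Function.comp, Complex.ofReal_pow] using hmsC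
  -- multiset of the λ's
  have hms : (Finset.univ.val.map lam) = Finset.univ.val.map ν := by
    have h5 := congrArg (Multiset.map Real.sqrt) hmsR
    rw [Multiset.map_map, Multiset.map_map] at h5
    calc Finset.univ.val.map lam
        = Finset.univ.val.map (Real.sqrt ∘ fun i => (lam i)^2) := by
          apply Multiset.map_congr rfl
          intro i _
          simp [Function.comp, Real.sqrt_sq (hnn i)]
      _ = Finset.univ.val.map (Real.sqrt ∘ fun i => (ν i)^2) := h5
      _ = Finset.univ.val.map ν := by
          apply Multiset.map_congr rfl
          intro i _
          simp [Function.comp, Real.sqrt_sq (hνnn i)]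
  -- sum of the λ's
  have hsum : lam 0 + lam 1 + lam 2 + lam 3 = 2*s + 2*t := by
    have h6 := congrArg Multiset.sum hms
    rw [← Finset.sum_eq_multiset_sum, ← Finset.sum_eq_multiset_sum,
      Fin.sum_univ_four, Fin.sum_univ_four] at h6
    have : ν 0 + ν 1 + ν 2 + ν 3 = 2*s + 2*t := by simp [hν]; ring
    linarith [h6, this]
  -- lam 0 is the largest
  have hmem : ∀ i : Fin 4, ∃ j : Fin 4, ν j = lam i := by
    intro i
    have : lam i ∈ Finset.univ.val.map ν := by
      rw [← hms]
      exact Multiset.mem_map_of_mem lam (Finset.mem_univ i)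
    obtain ⟨j, _, hj⟩ := Multiset.mem_map.1 this
    exact ⟨j, hj⟩
  have hmem' : ∀ j : Fin 4, ∃ i : Fin 4, lam i = ν j := by
    intro j
    have : ν j ∈ Finset.univ.val.map lam := by
      rw [hms]
      exact Multiset.mem_map_of_mem ν (Finset.mem_univ j)
    obtain ⟨i, _, hi⟩ := Multiset.mem_map.1 this
    exact ⟨i, hi⟩
  have hlam0 : lam 0 = max (s + K) (t + L) := by
    apply le_antisymm
    · obtain ⟨j, hj⟩ := hmem 0
      rw [← hj]
      fin_cases j
      · exact le_max_left _ _
      · exact le_trans (show ν 1 ≤ s + K by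
          rw [show ν 1 = s - K from rfl]; linarith) (le_max_left _ _)
      · exact le_max_right _ _
      · exact le_trans (show ν 3 ≤ t + L by
          rw [show ν 3 = t - L from rfl]; linarith) (le_max_right _ _)
    · apply max_le
      · obtain ⟨i, hi⟩ := hmem' 0
        have : ν 0 = s + K := by simp [hν]
        rw [← this, ← hi]
        exact hmono (Fin.zero_le i)
      · obtain ⟨i, hi⟩ := hmem' 2
        have : ν 2 = t + L := by simp [hν]
        rw [← this, ← hi]
        exact hmono (Fin.zero_le i)
  -- final computation
  have key : lam 0 - lam 1 - lam 2 - lam 3 = 2 * max (K - t) (L - s) := by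
    have h7 : lam 1 + lam 2 + lam 3 = 2*s + 2*t - lam 0 := by linarith
    rcases le_total (s + K) (t + L) with h | h
    · rw [max_eq_right (by linarith : K - t ≤ L - s)]
      rw [max_eq_right h] at hlam0
      linarith
    · rw [max_eq_left (by linarith : L - s ≤ K - t)]
      rw [max_eq_left h] at hlam0
      linarith
  rw [key]
  rcases le_total (max (K - t) (L - s)) 0 with h | h
  · rw [max_eq_left (by linarith), max_eq_left h] <;> ring
  · rw [max_eq_right (by linarith), max_eq_right h] <;> ring
end

section
/- The two-spin reduced density matrix of the ideal Fermi gas, ρ₁₂ = (1/(4−2f²)) · [[1−f², 0, 0, 0],[0, 1, −f², 0],[0, −f², 1, 0],[0, 0, 0, 1−f²]] with real parameter f, 0 ≤ f ≤ 1, has non-positive partial transpose (equivalently is entangled by the Peres–Horodecki criterion, equivalently has positive Wootters concurrence) if and only if f² > 1/2. -/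
open Matrix
open scoped ComplexOrder

/-- The two-spin reduced density matrix of the ideal Fermi gas, in the basis
`|↑↑⟩, |↑↓⟩, |↓↑⟩, |↓↓⟩` (indexed by `Fin 2 × Fin 2`):
`ρ₁₂ = (1/(4−2f²)) [[1−f²,0,0,0],[0,1,−f²,0],[0,−f²,1,0],[0,0,0,1−f²]]`. -/
noncomputable def fermiRho (f : ℝ) : Matrix (Fin 2 × Fin 2) (Fin 2 × Fin 2) ℂ :=
  Matrix.of fun p q =>
    (((4 - 2 * f ^ 2)⁻¹ : ℝ) : ℂ) *
      (if p = q then (if p.1 = p.2 then ((1 - f ^ 2 : ℝ) : ℂ) else 1)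
       else if p.1 ≠ p.2 ∧ q.1 ≠ q.2 then ((-(f ^ 2) : ℝ) : ℂ) else 0)

/-- The partial transpose over the second qubit. -/
noncomputable def partialTranspose (ρ : Matrix (Fin 2 × Fin 2) (Fin 2 × Fin 2) ℂ) :
    Matrix (Fin 2 × Fin 2) (Fin 2 × Fin 2) ℂ :=
  Matrix.of fun p q => ρ (p.1, q.2) (q.1, p.2)

/-- The quadratic form of the partial transpose, as an explicitly real expression. -/
lemma fermi_quadform (f : ℝ) (x : Fin 2 × Fin 2 → ℂ) :
    star x ⬝ᵥ (partialTranspose (fermiRho f)).mulVec x =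
      (((4 - 2 * f ^ 2)⁻¹ *
        ((1 - 2 * f ^ 2) * (Complex.normSq (x 0) + Complex.normSq (x 1)) +
          f ^ 2 * Complex.normSq (x 0 - x 1) +
          Complex.normSq (x (0, 1)) + Complex.normSq (x (1, 0))) : ℝ) : ℂ) := by
  simp only [dotProduct, mulVec, Fintype.sum_prod_type, Fin.sum_univ_two,
    partialTranspose, fermiRho, Matrix.of_apply, Pi.star_apply]
  norm_num [Prod.ext_iff]
  simp only [Complex.ofReal_mul, Complex.ofReal_add, Complex.ofReal_sub, Complex.ofReal_one,
    Complex.ofReal_pow, Complex.ofReal_ofNat, ← Complex.mul_conj, map_sub]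
  rw [show (0 : Fin 2 × Fin 2) = (0, 0) from rfl, show (1 : Fin 2 × Fin 2) = (1, 1) from rfl]
  ring

lemma fermi_psd (f : ℝ) (hf : f ^ 2 ≤ 1 / 2) :
    (partialTranspose (fermiRho f)).PosSemidef := by
  refine posSemidef_iff_dotProduct_mulVec.mpr ⟨?_, ?_⟩
  · ext p q
    obtain ⟨p1, p2⟩ := p; obtain ⟨q1, q2⟩ := q
    simp only [conjTranspose_apply, partialTranspose, fermiRho, Matrix.of_apply, _root_.map_mul,
      Complex.conj_ofReal, apply_ite (starRingEnd ℂ), _root_.map_one, map_zero]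
    fin_cases p1 <;> fin_cases p2 <;> fin_cases q1 <;> fin_cases q2 <;>
      norm_num [Prod.ext_iff]
  · intro x
    rw [fermi_quadform f x]
    rw [show ((0 : ℂ) = ((0 : ℝ) : ℂ)) from rfl, Complex.real_le_real]
    have h1 : (0:ℝ) ≤ 4 - 2 * f ^ 2 := by nlinarith
    have h2 : (0:ℝ) ≤ 1 - 2 * f ^ 2 := by linarith
    have n1 := Complex.normSq_nonneg (x 0)
    have n2 := Complex.normSq_nonneg (x 1)
    have n3 := Complex.normSq_nonneg (x 0 - x 1)
    have n4 := Complex.normSq_nonneg (x (0, 1))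
    have n5 := Complex.normSq_nonneg (x (1, 0))
    have := sq_nonneg f
    apply mul_nonneg (inv_nonneg.2 h1)
    nlinarith

/-- The two-spin reduced density matrix `ρ₁₂` of the ideal Fermi gas with parameter
`0 ≤ f ≤ 1` has non-positive partial transpose — equivalently, is entangled by the
Peres–Horodecki criterion — if and only if `f² > 1/2`. -/
theorem fermi_gas_entangled_iff (f : ℝ) (hf0 : 0 ≤ f) (hf1 : f ≤ 1) :
    ¬ (partialTranspose (fermiRho f)).PosSemidef ↔ 1 / 2 < f ^ 2 := by
  constructor
  · intro hn
    by_contra hle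
    push_neg at hle
    exact hn (fermi_psd f hle)
  · intro hf hPSD
    have hx := hPSD.dotProduct_mulVec_nonneg (fun p => if p = (0, 0) ∨ p = (1, 1) then 1 else 0)
    rw [fermi_quadform] at hx
    have h0 : ((0, 0) : Fin 2 × Fin 2) = 0 := rfl
    have h1 : ((1, 1) : Fin 2 × Fin 2) = 1 := rfl
    rw [show ((0 : ℂ) = ((0 : ℝ) : ℂ)) from rfl, Complex.real_le_real] at hx
    simp only [h0, h1] at hx
    norm_num [Prod.ext_iff] at hx
    have h2 : (0:ℝ) < 4 - 2 * f ^ 2 := by nlinarith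
    nlinarith [inv_pos.2 h2, mul_pos (inv_pos.2 h2) (by linarith : (0:ℝ) < 2 * (2 * f ^ 2 - 1))]
end
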